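/- If f is locally absolutely continuous on (a,r), f' ∈ L²((a,r);dx), and ∫_a^r |f(x)|²/(x-a)² dx < ∞, then lim_{x→a⁺} |f(x)|²/(x-a) = 0; in particular lim_{x→a⁺} f(x) = 0. -/

import Mathlib

open MeasureTheory Set Filter

/-- If `f` is locally absolutely continuous on `(a,r)`, `f' ∈ L²`, and
`∫ |f|²/(x-a)² < ∞`, then `|f(x)|²/(x-a) → 0` and `f(x) → 0` as `x → a⁺`. -/
theorem stmt2 (a : ℝ) (I : Set ℝ)
    (hI : (∃ r : ℝ, a < r ∧ I = Ioo a r) ∨ I = Ioi a)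
    (f f' : ℝ → ℂ)
    (hderiv : ∀ x ∈ I, HasDerivAt f (f' x) x)
    (hL2 : IntegrableOn (fun x => ‖f' x‖ ^ 2) I)
    (hw : IntegrableOn (fun x => ‖f x‖ ^ 2 / (x - a) ^ 2) I) :
    Tendsto (fun x => ‖f x‖ ^ 2 / (x - a)) (nhdsWithin a (Ioi a)) (nhds 0) ∧
    Tendsto f (nhdsWithin a (Ioi a)) (nhds 0) := by
  -- basic facts about the interval
  have hImeas : MeasurableSet I := by
    rcases hI with ⟨r, _, rfl⟩ | rfl
    · exact measurableSet_Ioo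
    · exact measurableSet_Ioi
  have hIa : ∀ x ∈ I, a < x := by
    rcases hI with ⟨r, _, rfl⟩ | rfl
    · exact fun x hx => hx.1
    · exact fun x hx => hx
  obtain ⟨c, hac, hsub⟩ : ∃ c, a < c ∧ Ioc a c ⊆ I := by
    rcases hI with ⟨r, har, rfl⟩ | rfl
    · refine ⟨(a + r) / 2, by linarith, fun x hx => ⟨hx.1, ?_⟩⟩
      have := hx.2; linarith
    · exact ⟨a + 1, by linarith, fun x hx => hx.1⟩
  set g : ℝ → ℝ := fun x => ‖f x‖ ^ 2 / (x - a) with hg_def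
  have hnormsq : ∀ z : ℂ, ‖z‖ ^ 2 = z.re ^ 2 + z.im ^ 2 := fun z => by
    rw [Complex.sq_norm, Complex.normSq_apply]; ring
  -- derivative of ‖f x‖²
  set Dn : ℝ → ℝ := fun t => 2 * (f t).re * (f' t).re + 2 * (f t).im * (f' t).im with hDn_def
  have hN : ∀ t ∈ I, HasDerivAt (fun x => ‖f x‖ ^ 2) (Dn t) t := by
    intro t ht
    have hu : HasDerivAt (fun x => (f x).re) ((f' t).re) t :=
      Complex.reCLM.hasFDerivAt.comp_hasDerivAt t (hderiv t ht)
    have hv : HasDerivAt (fun x => (f x).im) ((f' t).im) t :=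
      Complex.imCLM.hasFDerivAt.comp_hasDerivAt t (hderiv t ht)
    have h2 := (hu.pow 2).add (hv.pow 2)
    have heq : (fun x => ‖f x‖ ^ 2) = fun x => (f x).re ^ 2 + (f x).im ^ 2 :=
      funext fun x => hnormsq (f x)
    rw [heq]
    convert h2 using 1
    show 2 * (f t).re * (f' t).re + 2 * (f t).im * (f' t).im = _
    norm_num <;> ring
    all_goals rfl
  -- derivative of g on I
  have hgd : ∀ t ∈ I, HasDerivAt g ((Dn t * (t - a) - ‖f t‖ ^ 2 * 1) / (t - a) ^ 2) t := by
    intro t ht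
    have hs : t - a ≠ 0 := sub_ne_zero.2 (hIa t ht).ne'
    exact (hN t ht).div ((hasDerivAt_id t).sub_const a) hs
  have hderiv_eq : ∀ t ∈ I, deriv g t = (Dn t * (t - a) - ‖f t‖ ^ 2 * 1) / (t - a) ^ 2 :=
    fun t ht => (hgd t ht).deriv
  -- pointwise bound on deriv g on I
  have hbound : ∀ t ∈ I, |deriv g t| ≤ ‖f' t‖ ^ 2 + 2 * (‖f t‖ ^ 2 / (t - a) ^ 2) := by
    intro t ht
    rw [hderiv_eq t ht]
    have hs : (0 : ℝ) < t - a := sub_pos.2 (hIa t ht)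
    set s := t - a
    set A := ‖f t‖
    set B := ‖f' t‖
    have hDnb : |Dn t| ≤ 2 * (A * B) := by
      have h1 : Dn t = 2 * ((starRingEnd ℂ) (f t) * f' t).re := by
        simp [hDn_def, Complex.mul_re]; ring
      rw [h1, abs_mul, abs_two]
      have h2 : |((starRingEnd ℂ) (f t) * f' t).re| ≤ A * B := by
        refine (Complex.abs_re_le_norm _).trans ?_
        rw [norm_mul, Complex.norm_conj]
      linarith
    rw [abs_div, abs_of_pos (by positivity : (0:ℝ) < s ^ 2), div_le_iff₀ (by positivity)]
    have hre : (B ^ 2 + 2 * (A ^ 2 / s ^ 2)) * s ^ 2 = B ^ 2 * s ^ 2 + 2 * A ^ 2 := by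
      field_simp
    have hD := abs_le.mp hDnb
    have h1 := mul_le_mul_of_nonneg_right hD.2 hs.le
    have h2 := mul_le_mul_of_nonneg_right (neg_le_of_abs_le hDnb) hs.le
    rw [hre, abs_le]
    constructor
    · nlinarith [sq_nonneg (A - B * s), sq_nonneg (A + B * s), sq_nonneg A, sq_nonneg (B * s)]
    · nlinarith [sq_nonneg (A - B * s), sq_nonneg (A + B * s), sq_nonneg A, sq_nonneg (B * s)]
  -- integrability of deriv g on I
  have hmeas : Measurable (deriv g) := measurable_deriv g
  have hM : IntegrableOn (fun t => ‖f' t‖ ^ 2 + 2 * (‖f t‖ ^ 2 / (t - a) ^ 2)) I :=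
    hL2.add (hw.const_mul 2)
  have hDint : IntegrableOn (deriv g) I := by
    refine hM.mono' hmeas.aestronglyMeasurable ?_
    rw [ae_restrict_iff' hImeas]
    exact ae_of_all _ fun t ht => by simpa [Real.norm_eq_abs] using hbound t ht
  have hsubI : ∀ x y : ℝ, a ≤ x → x ≤ y → y ≤ c → IntervalIntegrable (deriv g) volume x y := by
    intro x y hx hxy hy
    rw [intervalIntegrable_iff, uIoc_of_le hxy]
    exact hDint.mono_set fun t ht => hsub ⟨lt_of_le_of_lt hx ht.1, ht.2.trans hy⟩
  have hcI : c ∈ I := hsub ⟨hac, le_rfl⟩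
  -- FTC on [x, c] for x ∈ (a, c]
  have hftc : ∀ x ∈ Ioc a c, (∫ t in x..c, deriv g t) = g c - g x := by
    intro x hx
    refine intervalIntegral.integral_eq_sub_of_hasDerivAt ?_ (hsubI x c hx.1.le hx.2 le_rfl)
    intro t ht
    rw [uIcc_of_le hx.2] at ht
    have htI : t ∈ I := hsub ⟨lt_of_lt_of_le hx.1 ht.1, ht.2⟩
    exact (hgd t htI).differentiableAt.hasDerivAt
  -- the primitive F x = ∫_{(a,x]} deriv g tends to 0 as x → a⁺
  have hIccInt : IntegrableOn (deriv g) (Icc a c) := by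
    rw [integrableOn_Icc_iff_integrableOn_Ioc]
    exact hDint.mono_set hsub
  have hcont := intervalIntegral.continuousOn_primitive hIccInt
  have hF0 : Tendsto (fun x => ∫ t in Ioc a x, deriv g t) (nhdsWithin a (Ioi a)) (nhds 0) := by
    have h0 : (∫ t in Ioc a a, deriv g t) = 0 := by simp
    have := (hcont a (left_mem_Icc.mpr hac.le)).tendsto
    rw [h0] at this
    rw [← nhdsWithin_Ioc_eq_nhdsGT hac]
    exact this.mono_left (nhdsWithin_mono a Ioc_subset_Icc_self)
  set L : ℝ := g c - ∫ t in Ioc a c, deriv g t with hL_def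
  have hmemIoc : Ioc a c ∈ nhdsWithin a (Ioi a) := by
    rw [← nhdsWithin_Ioc_eq_nhdsGT hac]
    exact self_mem_nhdsWithin
  have hgeq : ∀ x ∈ Ioc a c, g x = L + ∫ t in Ioc a x, deriv g t := by
    intro x hx
    have hadd : (∫ t in a..x, deriv g t) + (∫ t in x..c, deriv g t) = ∫ t in a..c, deriv g t := by
      exact intervalIntegral.integral_add_adjacent_intervals
        (hsubI a x le_rfl hx.1.le hx.2) (hsubI x c hx.1.le hx.2 le_rfl)
    have e1 : (∫ t in a..x, deriv g t) = ∫ t in Ioc a x, deriv g t :=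
      intervalIntegral.integral_of_le hx.1.le
    have e2 : (∫ t in a..c, deriv g t) = ∫ t in Ioc a c, deriv g t :=
      intervalIntegral.integral_of_le hac.le
    have := hftc x hx
    rw [e1, e2] at hadd
    rw [hL_def]
    linarith
  have hgL : Tendsto g (nhdsWithin a (Ioi a)) (nhds L) := by
    have h1 : Tendsto (fun x => L + ∫ t in Ioc a x, deriv g t) (nhdsWithin a (Ioi a))
        (nhds (L + 0)) := tendsto_const_nhds.add hF0
    rw [add_zero] at h1
    exact Tendsto.congr' (eventually_of_mem hmemIoc fun x hx => (hgeq x hx).symm) h1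
  -- L is nonnegative
  have hgnonneg : ∀ᶠ x in nhdsWithin a (Ioi a), 0 ≤ g x :=
    eventually_of_mem hmemIoc fun x hx => by
      have : (0:ℝ) < x - a := sub_pos.2 hx.1
      positivity
  have hLnonneg : 0 ≤ L := ge_of_tendsto hgL hgnonneg
  -- L = 0
  have hL0 : L = 0 := by
    by_contra hne
    have hLpos : 0 < L := lt_of_le_of_ne hLnonneg (Ne.symm hne)
    have hev : ∀ᶠ x in nhdsWithin a (Ioi a), L / 2 < g x :=
      hgL.eventually (eventually_gt_nhds (by linarith))
    obtain ⟨d, had, hd⟩ := (nhdsGT_basis a).eventually_iff.mp hev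
    set d' : ℝ := min d c with hd'_def
    have had' : a < d' := lt_min had hac
    have hIood' : Ioo a d' ⊆ I := fun t ht => hsub ⟨ht.1, ht.2.le.trans (min_le_right _ _)⟩
    have hIood : Ioo a d' ⊆ Ioo a d := fun t ht => ⟨ht.1, lt_of_lt_of_le ht.2 (min_le_left _ _)⟩
    -- (x - a)⁻¹ would be integrable on (a, d')
    have hint : IntegrableOn (fun x => (x - a)⁻¹) (Ioo a d') := by
      refine Integrable.mono' (((hw.mono_set hIood').const_mul (2 / L))) ?_ ?_
      · exact ((measurable_id.sub_const a).inv).aestronglyMeasurable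
      · rw [ae_restrict_iff' measurableSet_Ioo]
        refine ae_of_all _ fun x hx => ?_
        have hs : (0:ℝ) < x - a := sub_pos.2 hx.1
        have hgx : L / 2 < g x := hd (hIood hx)
        have h2 : L / 2 * (x - a) ≤ ‖f x‖ ^ 2 := ((lt_div_iff₀ hs).mp hgx).le
        have e1 : (x - a)⁻¹ = 2 / L * ((L / 2 * (x - a)) / (x - a) ^ 2) := by
          field_simp
        rw [Real.norm_eq_abs, abs_of_pos (inv_pos.2 hs), e1]
        gcongr
    have hint2 : IntervalIntegrable (fun x => (x - a)⁻¹) volume a d' := by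
      rw [intervalIntegrable_iff, uIoc_of_le had'.le]
      rwa [← integrableOn_Ioc_iff_integrableOn_Ioo] at hint
    rcases intervalIntegrable_sub_inv_iff.mp hint2 with h | h
    · exact had'.ne h
    · exact h left_mem_uIcc
  rw [hL0] at hgL
  refine ⟨hgL, ?_⟩
  have hxa : Tendsto (fun x : ℝ => x - a) (nhdsWithin a (Ioi a)) (nhds 0) := by
    have h : Tendsto (fun x : ℝ => x - a) (nhds a) (nhds (a - a)) :=
      (continuous_id.sub continuous_const).tendsto a
    rw [sub_self] at h
    exact h.mono_left nhdsWithin_le_nhds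
  have hsq : Tendsto (fun x => ‖f x‖ ^ 2) (nhdsWithin a (Ioi a)) (nhds 0) := by
    have h1 : Tendsto (fun x => g x * (x - a)) (nhdsWithin a (Ioi a)) (nhds (0 * 0)) :=
      hgL.mul hxa
    rw [mul_zero] at h1
    refine Tendsto.congr' (eventually_of_mem hmemIoc fun x hx => ?_) h1
    have hs : x - a ≠ 0 := sub_ne_zero.2 (ne_of_gt hx.1)
    exact div_mul_cancel₀ _ hs
  have hnorm : Tendsto (fun x => ‖f x‖) (nhdsWithin a (Ioi a)) (nhds 0) := by
    have h1 : Tendsto (fun x => Real.sqrt (‖f x‖ ^ 2)) (nhdsWithin a (Ioi a))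
        (nhds (Real.sqrt 0)) := (Real.continuous_sqrt.tendsto 0).comp hsq
    rw [Real.sqrt_zero] at h1
    refine Tendsto.congr (fun x => ?_) h1
    exact Real.sqrt_sq (norm_nonneg _)
  exact tendsto_zero_iff_norm_tendsto_zero.mpr hnorm
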